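/- Let $\zeta_1,\dots,\zeta_M > 0$ and $c_m, d_m \in \mathbb{R}$ with not all $c_m = d_m$. Define $\hat{M}_1(\lambda) = \sum_m \frac{(c_m - d_m)^2\zeta_m^2}{(\lambda + \zeta_m)^2} + \sum_m \frac{d_m^2\lambda^2}{(\lambda + \zeta_m)^2}$. Then there exists $\lambda > 0$ such that $\hat{M}_1(\lambda) < \hat{M}_1(0)$. -/

import Mathlib

open Finset

/-- Theorem 4: there is a positive ridge parameter strictly improving on `λ = 0`. -/
theorem stmt11 {M : ℕ} (ζ c d : Fin M → ℝ) (hζ : ∀ m, 0 < ζ m) (hcd : c ≠ d)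
    (M1 : ℝ → ℝ)
    (hM1 : ∀ l, M1 l = ∑ m, (c m - d m) ^ 2 * (ζ m) ^ 2 / (l + ζ m) ^ 2
      + ∑ m, (d m) ^ 2 * l ^ 2 / (l + ζ m) ^ 2) :
    ∃ lam > (0 : ℝ), M1 lam < M1 0 := by
  have hMfun : M1 = fun l => ∑ m, (c m - d m) ^ 2 * (ζ m) ^ 2 / (l + ζ m) ^ 2
      + ∑ m, (d m) ^ 2 * l ^ 2 / (l + ζ m) ^ 2 := funext hM1
  obtain ⟨m0, hm0⟩ : ∃ m, c m ≠ d m := by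
    by_contra h; push_neg at h; exact hcd (funext h)
  -- derivative at 0
  have key : HasDerivAt M1 (∑ m : Fin M, -(2 * (c m - d m) ^ 2 / ζ m)) 0 := by
    rw [hMfun]
    have h1 : ∀ m : Fin M, HasDerivAt (fun l : ℝ => (c m - d m) ^ 2 * (ζ m) ^ 2 / (l + ζ m) ^ 2)
        (-(2 * (c m - d m) ^ 2 / ζ m)) 0 := by
      intro m
      have hz : (ζ m) ≠ 0 := (hζ m).ne'
      have hden : ((0 : ℝ) + ζ m) ^ 2 ≠ 0 := by
        have := hζ m; positivity
      have h : HasDerivAt (fun l : ℝ => (c m - d m) ^ 2 * (ζ m) ^ 2 / (l + ζ m) ^ 2) _ 0 :=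
        (hasDerivAt_const (0 : ℝ) ((c m - d m) ^ 2 * (ζ m) ^ 2)).div
        (((hasDerivAt_id (0 : ℝ)).add_const (ζ m)).pow 2) hden
      convert h using 1
      simp only [id_eq, zero_add]
      field_simp
      ring
    have h2 : ∀ m : Fin M, HasDerivAt (fun l : ℝ => (d m) ^ 2 * l ^ 2 / (l + ζ m) ^ 2) 0 0 := by
      intro m
      have hden : ((0 : ℝ) + ζ m) ^ 2 ≠ 0 := by
        have := hζ m; positivity
      have h : HasDerivAt (fun l : ℝ => (d m) ^ 2 * l ^ 2 / (l + ζ m) ^ 2) _ 0 :=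
        ((hasDerivAt_pow 2 (0 : ℝ)).const_mul ((d m) ^ 2)).div
        (((hasDerivAt_id (0 : ℝ)).add_const (ζ m)).pow 2) hden
      convert h using 1
      norm_num
    have hs1 : HasDerivAt (fun l : ℝ => ∑ m : Fin M, (c m - d m) ^ 2 * (ζ m) ^ 2 / (l + ζ m) ^ 2)
        (∑ m : Fin M, -(2 * (c m - d m) ^ 2 / ζ m)) 0 := HasDerivAt.fun_sum (fun m _ => h1 m)
    have hs2 : HasDerivAt (fun l : ℝ => ∑ m : Fin M, (d m) ^ 2 * l ^ 2 / (l + ζ m) ^ 2)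
        (∑ _m : Fin M, (0 : ℝ)) 0 := HasDerivAt.fun_sum (fun m _ => h2 m)
    simpa using hs1.fun_add hs2
  -- derivative is negative
  have hDneg : (∑ m : Fin M, -(2 * (c m - d m) ^ 2 / ζ m)) < 0 := by
    have : (∑ m : Fin M, -(2 * (c m - d m) ^ 2 / ζ m)) < ∑ _m : Fin M, (0 : ℝ) := by
      apply Finset.sum_lt_sum
      · intro m _
        have hzm := hζ m
        have : 0 ≤ 2 * (c m - d m) ^ 2 / ζ m := by positivity
        linarith
      · refine ⟨m0, Finset.mem_univ _, ?_⟩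
        have hne : (c m0 - d m0) ≠ 0 := sub_ne_zero.mpr hm0
        have hzm := hζ m0
        have hsq : 0 < (c m0 - d m0) ^ 2 := by positivity
        have : 0 < 2 * (c m0 - d m0) ^ 2 / ζ m0 := by positivity
        linarith
    simpa using this
  -- slope argument
  have hslope := hasDerivAt_iff_tendsto_slope.mp key
  have hev : ∀ᶠ y in nhdsWithin (0 : ℝ) {(0 : ℝ)}ᶜ, slope M1 0 y < 0 :=
    Filter.Tendsto.eventually_lt_const hDneg hslope
  have hle : nhdsWithin (0 : ℝ) (Set.Ioi 0) ≤ nhdsWithin (0 : ℝ) {(0 : ℝ)}ᶜ :=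
    nhdsWithin_mono _ (fun y hy => ne_of_gt hy)
  have hev2 : ∀ᶠ y in nhdsWithin (0 : ℝ) (Set.Ioi 0), slope M1 0 y < 0 := hle hev
  have hmem : ∀ᶠ y in nhdsWithin (0 : ℝ) (Set.Ioi 0), y ∈ Set.Ioi (0 : ℝ) :=
    self_mem_nhdsWithin
  obtain ⟨y, hy0, hys⟩ := (hmem.and hev2).exists
  have hy : (0 : ℝ) < y := hy0
  refine ⟨y, hy, ?_⟩
  have hlt : y⁻¹ * (M1 y - M1 0) < 0 := by simpa [slope] using hys
  by_contra hcon
  push_neg at hcon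
  have : 0 ≤ y⁻¹ * (M1 y - M1 0) := mul_nonneg (inv_pos.mpr hy).le (by linarith)
  linarith
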